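/- Suppose that d is a metric on ℝ with the following properties: (a) there is L₀ such that d(−x,−y) ≤ L₀·d(x,y) and d(|x|,|y|) ≤ L₀·d(x,y) for all x, y ∈ ℝ; (b) there is C₁ such that for all real numbers 0 ≤ a, b and all c, c' lying between a and b, one has d(c, c') ≤ C₁·d(a,b); (c) there is C such that d(−z, z) ≤ C·d(x,y) whenever x ≤ −z ≤ z ≤ y. Then for every integer n ≥ 2 the map μ(x₁,…,xₙ) = (min_{1≤k≤n} |x_k|)·sign(max_{1≤k≤n} x_k), where sign x ∈ {−1,0,1}, is a Lipschitz n-mean on the metric space (ℝ, d): it is invariant under permutations of its arguments, satisfies μ(x,…,x) = x, and is Lipschitz with respect to d (with some constant depending only on L₀, C₁, C). -/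

import Mathlib

/-- Suppose `d` is a metric on `ℝ` such that (a) `x ↦ -x` and
`x ↦ |x|` are `L₀`-Lipschitz, (b) the half-line `[0,∞)` has bounded turning with
constant `C₁` (any two points between nonnegative `a, b` are at `d`-distance at most
`C₁·d(a,b)`), and (c) `d(-z,z) ≤ C·d(x,y)` whenever `x ≤ -z ≤ z ≤ y`. Then for every
`n ≥ 2` the map `μ(x₁,…,xₙ) = (min_k |x_k|)·sign(max_k x_k)` is a Lipschitz `n`-mean
on `(ℝ, d)`, with a Lipschitz constant depending only on `L₀, C₁, C`. -/
theorem lipschitz_n_mean_on_real_line_with_symmetric_metric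
    (L₀ C₁ C : ℝ) :
    ∃ L : ℝ, 0 ≤ L ∧
      ∀ d : ℝ → ℝ → ℝ,
        (∀ x y, 0 ≤ d x y) →
        (∀ x y, d x y = d y x) →
        (∀ x y, d x y = 0 ↔ x = y) →
        (∀ x y z, d x z ≤ d x y + d y z) →
        (∀ x y, d (-x) (-y) ≤ L₀ * d x y) →
        (∀ x y, d |x| |y| ≤ L₀ * d x y) →
        (∀ a b c c' : ℝ, 0 ≤ a → 0 ≤ b →
          min a b ≤ c → c ≤ max a b → min a b ≤ c' → c' ≤ max a b →
          d c c' ≤ C₁ * d a b) →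
        (∀ x y z : ℝ, x ≤ -z → -z ≤ z → z ≤ y → d (-z) z ≤ C * d x y) →
        ∀ n : ℕ, 2 ≤ n →
          let μ : (Fin n → ℝ) → ℝ := fun x => (⨅ k, |x k|) * Real.sign (⨆ k, x k)
          (∀ (x : Fin n → ℝ) (π : Equiv.Perm (Fin n)), μ (x ∘ π) = μ x) ∧
          (∀ a : ℝ, μ (fun _ => a) = a) ∧
          (∀ x y : Fin n → ℝ, d (μ x) (μ y) ≤ L * ∑ k, d (x k) (y k)) := by
  refine ⟨|C| + |C₁| * |L₀| + |C₁| ^ 2 * |L₀| + |C₁| * |L₀| ^ 2 + |C₁| ^ 2 * |L₀| ^ 2,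
    by positivity, ?_⟩
  intro d hnn hsymm hzero htri hnegL habsL hBT hCc n hn μ
  haveI : Nonempty (Fin n) := Fin.pos_iff_nonempty.mp (by omega)
  have hμdef : μ = fun x : Fin n → ℝ => (⨅ k, |x k|) * Real.sign (⨆ k, x k) := rfl
  -- basic positivity of the constants
  have hd01 : 0 < d 0 1 := by
    rcases (hnn 0 1).lt_or_eq with h | h
    · exact h
    · exact absurd ((hzero 0 1).mp h.symm) (by norm_num)
  have hL0 : 1 ≤ L₀ := by
    have := habsL 0 1
    simp only [abs_zero, abs_one] at this
    nlinarith
  have hC1 : 1 ≤ C₁ := by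
    have := hBT 0 1 0 1 le_rfl zero_le_one (by simp) (by simp) (by simp) (by simp)
    nlinarith
  have hC : 1 ≤ C := by
    have hd : 0 < d (-1) 1 := by
      rcases (hnn (-1) 1).lt_or_eq with h | h
      · exact h
      · exact absurd ((hzero (-1) 1).mp h.symm) (by norm_num)
    have := hCc (-1) 1 1 (by norm_num) (by norm_num) le_rfl
    nlinarith
  have habsC : |C| = C := abs_of_pos (by linarith)
  have habsC1 : |C₁| = C₁ := abs_of_pos (by linarith)
  have habsL0 : |L₀| = L₀ := abs_of_pos (by linarith)
  rw [habsC, habsC1, habsL0]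
  set L : ℝ := C + C₁ * L₀ + C₁ ^ 2 * L₀ + C₁ * L₀ ^ 2 + C₁ ^ 2 * L₀ ^ 2 with hL
  have h0L : (0:ℝ) ≤ L₀ := by linarith
  have h0C1 : (0:ℝ) ≤ C₁ := by linarith
  have t0 : (0:ℝ) ≤ C₁ * L₀ := mul_nonneg h0C1 h0L
  have t1 : (0:ℝ) ≤ C₁ ^ 2 * L₀ := mul_nonneg (sq_nonneg _) h0L
  have t2 : (0:ℝ) ≤ C₁ * L₀ ^ 2 := mul_nonneg h0C1 (sq_nonneg _)
  have t3 : (0:ℝ) ≤ C₁ ^ 2 * L₀ ^ 2 := mul_nonneg (sq_nonneg _) (sq_nonneg _)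
  have hCL1 : C₁ * L₀ ≤ L := by rw [hL]; linarith
  have hCL2 : L₀ * (C₁ * L₀) ≤ L := by
    have e : L₀ * (C₁ * L₀) = C₁ * L₀ ^ 2 := by ring
    rw [hL, e]; linarith
  -- min of absolute values
  set M : (Fin n → ℝ) → ℝ := fun v => ⨅ k, |v k| with hM
  have hMnn : ∀ v, 0 ≤ M v := fun v => le_ciInf fun k => abs_nonneg _
  have hMle : ∀ v k, M v ≤ |v k| := fun v k => ciInf_le (Finite.bddBelow_range _) k
  have hMex : ∀ v : Fin n → ℝ, ∃ j, |v j| = M v := fun v => exists_eq_ciInf_of_finite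
  have hSex : ∀ v : Fin n → ℝ, ∃ j, v j = ⨆ k, v k := fun v => exists_eq_ciSup_of_finite
  have hSle : ∀ (v : Fin n → ℝ) k, v k ≤ ⨆ k, v k := fun v k =>
    le_ciSup (Finite.bddAbove_range _) k
  -- value of μ according to sign of the sup
  have hμ_eq : ∀ v : Fin n → ℝ,
      (0 ≤ (⨆ k, v k) ∧ μ v = M v) ∨ ((⨆ k, v k) < 0 ∧ μ v = -(M v)) := by
    intro v
    rcases lt_trichotomy (⨆ k, v k) 0 with h | h | h
    · right
      refine ⟨h, ?_⟩
      rw [hμdef]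
      simp only [Real.sign_of_neg h, mul_neg_one]; rfl
    · left
      refine ⟨h.ge, ?_⟩
      obtain ⟨j, hj⟩ := hSex v
      have hvj : v j = 0 := by rw [hj, h]
      have hMv : M v = 0 := le_antisymm (by simpa [hvj] using hMle v j) (hMnn v)
      rw [hμdef]
      simp only [h, Real.sign_zero, mul_zero]
      rw [hMv]
    · left
      refine ⟨h.le, ?_⟩
      rw [hμdef]
      simp only [Real.sign_of_pos h, mul_one]; rfl
  refine ⟨?_, ?_, ?_⟩
  · -- permutation invariance
    intro x π
    rw [hμdef]
    have h1 : Set.range (fun k => |x (π k)|) = Set.range (fun k => |x k|) := by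
      rw [show (fun k => |x (π k)|) = (fun k => |x k|) ∘ π from rfl]
      exact π.surjective.range_comp _
    have h2 : Set.range (fun k => x (π k)) = Set.range x := by
      rw [show (fun k => x (π k)) = x ∘ π from rfl]
      exact π.surjective.range_comp _
    simp only [Function.comp, iInf, iSup, h1, h2]
  · -- μ(a,…,a) = a
    intro a
    rw [hμdef]
    simp only [ciInf_const, ciSup_const]
    rcases lt_trichotomy a 0 with h | h | h
    · rw [Real.sign_of_neg h, abs_of_neg h]; ring
    · simp [h]
    · rw [Real.sign_of_pos h, abs_of_pos h]; ring
  · -- Lipschitz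
    intro x y
    have hsumnn : ∀ u v : Fin n → ℝ, (0:ℝ) ≤ ∑ k, d (u k) (v k) := fun u v =>
      Finset.sum_nonneg fun k _ => hnn _ _
    have hterm : ∀ (u v : Fin n → ℝ) k, d (u k) (v k) ≤ ∑ k, d (u k) (v k) := fun u v k =>
      Finset.single_le_sum (fun k _ => hnn _ _) (Finset.mem_univ k)
    -- Lemma A : min of abs is Lipschitz
    have hA : ∀ u v : Fin n → ℝ, d (M u) (M v) ≤ C₁ * L₀ * ∑ k, d (u k) (v k) := by
      intro u v
      obtain ⟨j, hj⟩ := hMex u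
      obtain ⟨l, hl⟩ := hMex v
      have key : ∃ k, d (M u) (M v) ≤ C₁ * d |u k| |v k| := by
        rcases le_total (|u j|) (|v l|) with h | h
        · refine ⟨j, hBT (|u j|) (|v j|) (M u) (M v) (abs_nonneg _) (abs_nonneg _)
            (hj ▸ min_le_left _ _) (hj ▸ le_max_left _ _) ?_ ?_⟩
          · calc min |u j| |v j| ≤ |u j| := min_le_left _ _
              _ ≤ |v l| := h
              _ = M v := hl
          · exact le_trans (hMle v j) (le_max_right _ _)
        · refine ⟨l, hBT (|u l|) (|v l|) (M u) (M v) (abs_nonneg _) (abs_nonneg _) ?_ ?_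
            (hl ▸ min_le_right _ _) (hl ▸ le_max_right _ _)⟩
          · calc min |u l| |v l| ≤ |v l| := min_le_right _ _
              _ ≤ |u j| := h
              _ = M u := hj
          · exact le_trans (hMle u l) (le_max_left _ _)
      obtain ⟨k, hk⟩ := key
      calc d (M u) (M v) ≤ C₁ * d |u k| |v k| := hk
        _ ≤ C₁ * (L₀ * d (u k) (v k)) :=
          mul_le_mul_of_nonneg_left (habsL (u k) (v k)) h0C1
        _ ≤ C₁ * (L₀ * ∑ k, d (u k) (v k)) :=
          mul_le_mul_of_nonneg_left
            (mul_le_mul_of_nonneg_left (hterm u v k) h0L) h0C1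
        _ = C₁ * L₀ * ∑ k, d (u k) (v k) := by ring
    -- key mixed-sign estimate
    have hkey : ∀ u v : Fin n → ℝ, 0 ≤ (⨆ k, u k) → (⨆ k, v k) < 0 →
        d (M u) (-(M v)) ≤ L * ∑ k, d (u k) (v k) := by
      intro u v hu hv
      set S := ∑ k, d (u k) (v k) with hS
      have hSnn : 0 ≤ S := hsumnn u v
      obtain ⟨j, hj⟩ := hSex u
      have huj : 0 ≤ u j := by rw [hj]; exact hu
      have hvj : v j < 0 := lt_of_le_of_lt (hSle v j) hv
      set z := min (M u) (M v) with hz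
      have hz0 : 0 ≤ z := le_min (hMnn u) (hMnn v)
      have h1 : v j ≤ -z := by
        have h := (min_le_right (M u) (M v)).trans (hMle v j)
        rw [abs_of_neg hvj] at h
        linarith
      have h2 : z ≤ u j := by
        have h := (min_le_left (M u) (M v)).trans (hMle u j)
        rwa [abs_of_nonneg huj] at h
      have hdz : d (-z) z ≤ C * S := by
        calc d (-z) z ≤ C * d (v j) (u j) := hCc (v j) (u j) z h1 (by linarith) h2
          _ = C * d (u j) (v j) := by rw [hsymm]
          _ ≤ C * S := mul_le_mul_of_nonneg_left (hterm u v j) (by linarith)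
      have hAuv : d (M u) (M v) ≤ C₁ * L₀ * S := hA u v
      have hbt1 : d (M u) z ≤ C₁ * d (M u) (M v) :=
        hBT (M u) (M v) (M u) z (hMnn u) (hMnn v) (min_le_left _ _) (le_max_left _ _)
          hz.ge (hz.le.trans min_le_max)
      have hbt2 : d z (M v) ≤ C₁ * d (M u) (M v) :=
        hBT (M u) (M v) z (M v) (hMnn u) (hMnn v) hz.ge (hz.le.trans min_le_max)
          (min_le_right _ _) (le_max_right _ _)
      have hneg2 : d (-z) (-(M v)) ≤ L₀ * d z (M v) := hnegL z (M v)
      have htri2 : d (M u) (-(M v)) ≤ d (M u) z + (d z (-z) + d (-z) (-(M v))) :=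
        le_trans (htri (M u) z (-(M v))) (by linarith [htri z (-z) (-(M v))])
      have hzz : d z (-z) = d (-z) z := hsymm z (-z)
      have hdMnn : 0 ≤ d (M u) (M v) := hnn _ _
      have hdzMv : 0 ≤ d z (M v) := hnn _ _
      have e1 : C₁ * d (M u) (M v) ≤ C₁ * (C₁ * L₀ * S) :=
        mul_le_mul_of_nonneg_left hAuv h0C1
      have e2 : d z (M v) ≤ C₁ * (C₁ * L₀ * S) := hbt2.trans e1
      have e3 : L₀ * d z (M v) ≤ L₀ * (C₁ * (C₁ * L₀ * S)) :=
        mul_le_mul_of_nonneg_left e2 h0L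
      have e4 : C₁ * (C₁ * L₀ * S) + (C * S + L₀ * (C₁ * (C₁ * L₀ * S)))
          = (C₁ ^ 2 * L₀ + C + C₁ ^ 2 * L₀ ^ 2) * S := by ring
      have e5 : C₁ ^ 2 * L₀ + C + C₁ ^ 2 * L₀ ^ 2 ≤ L := by rw [hL]; linarith
      have e6 : (C₁ ^ 2 * L₀ + C + C₁ ^ 2 * L₀ ^ 2) * S ≤ L * S :=
        mul_le_mul_of_nonneg_right e5 hSnn
      calc d (M u) (-(M v)) ≤ d (M u) z + (d z (-z) + d (-z) (-(M v))) := htri2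
        _ ≤ C₁ * d (M u) (M v) + (C * S + L₀ * d z (M v)) := by rw [hzz]; linarith
        _ ≤ C₁ * (C₁ * L₀ * S) + (C * S + L₀ * (C₁ * (C₁ * L₀ * S))) := by linarith
        _ = (C₁ ^ 2 * L₀ + C + C₁ ^ 2 * L₀ ^ 2) * S := e4
        _ ≤ L * S := e6
    rcases hμ_eq x with ⟨hx, hμx⟩ | ⟨hx, hμx⟩ <;> rcases hμ_eq y with ⟨hy, hμy⟩ | ⟨hy, hμy⟩
    · rw [hμx, hμy]
      calc d (M x) (M y) ≤ C₁ * L₀ * ∑ k, d (x k) (y k) := hA x y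
        _ ≤ L * ∑ k, d (x k) (y k) :=
          mul_le_mul_of_nonneg_right hCL1 (hsumnn x y)
    · rw [hμx, hμy]
      exact hkey x y hx hy
    · rw [hμx, hμy, hsymm]
      have hsum : ∑ k, d (y k) (x k) = ∑ k, d (x k) (y k) :=
        Finset.sum_congr rfl fun k _ => hsymm _ _
      calc d (M y) (-(M x)) ≤ L * ∑ k, d (y k) (x k) := hkey y x hy hx
        _ = L * ∑ k, d (x k) (y k) := by rw [hsum]
    · rw [hμx, hμy]
      calc d (-(M x)) (-(M y)) ≤ L₀ * d (M x) (M y) := hnegL _ _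
        _ ≤ L₀ * (C₁ * L₀ * ∑ k, d (x k) (y k)) :=
          mul_le_mul_of_nonneg_left (hA x y) h0L
        _ = L₀ * (C₁ * L₀) * ∑ k, d (x k) (y k) := by ring
        _ ≤ L * ∑ k, d (x k) (y k) :=
          mul_le_mul_of_nonneg_right hCL2 (hsumnn x y)
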